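/- There exists a sequence of merges on n = 2^k single-node trees (no cuts) with n − 1 merges and Ω(n log n) total parent changes: merging paths in pairs with perfect interleaving at each of the k levels causes n/2 + 3n/4 + 7n/8 + ... parent changes, which is at least (n/2)·k − n. -/

import Mathlib

/-- `prel p a b` : `b` is the parent of `a`. -/
def prel (p : ℤ → Option ℤ) (a b : ℤ) : Prop := p a = some b

/-- `anc p a b` : `b` is an ancestor of `a` (including `a` itself). -/
def anc (p : ℤ → Option ℤ) (a b : ℤ) : Prop := Relation.ReflTransGen (prel p) a b

/-- `MergeStep p q v w` : the forest `q` is obtained from the forest `p` by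
`merge(v,w)`: the nodes of the root paths of `v` and `w` are rearranged into a
single chain in increasing (heap) order, all other parents unchanged. -/
def MergeStep (p q : ℤ → Option ℤ) (v w : ℤ) : Prop :=
  (∀ x : ℤ, ¬ (anc p v x ∨ anc p w x) → q x = p x) ∧
  (∀ x : ℤ, (anc p v x ∨ anc p w x) →
    (∀ b : ℤ, q x = some b ↔ ((anc p v b ∨ anc p w b) ∧ b < x ∧
        ∀ z : ℤ, (anc p v z ∨ anc p w z) → z < x → z ≤ b)) ∧
    (q x = none ↔ ∀ z : ℤ, (anc p v z ∨ anc p w z) → ¬ z < x))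

namespace MergeProof

/-- Parent function of a forest of interleaved arithmetic chains on `[0,N)`:
classes `r` mod `h` for `r < j` are already merged (step `h`), the rest still
have step `M`. -/
def gpar (h M j N : ℕ) (x : ℤ) : Option ℤ :=
  if 0 ≤ x ∧ x < (N : ℤ) then
    if x % (h : ℤ) < (j : ℤ) then
      (if (h : ℤ) ≤ x then some (x - (h : ℤ)) else none)
    else
      (if (M : ℤ) ≤ x then some (x - (M : ℤ)) else none)
  else none

/-- The forest after `t` merges. -/
def Fk (k t : ℕ) : ℤ → Option ℤ :=
  gpar (2 ^ (Nat.clog 2 (2 ^ k - t)) / 2) (2 ^ (Nat.clog 2 (2 ^ k - t)))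
       (2 ^ (Nat.clog 2 (2 ^ k - t)) - (2 ^ k - t)) (2 ^ k)

lemma gpar_mem {h M j N : ℕ} {x b : ℤ} (hx : gpar h M j N x = some b) :
    (0 ≤ x ∧ x < (N:ℤ)) ∧ (0 ≤ b ∧ b < (N:ℤ)) := by
  unfold gpar at hx
  split_ifs at hx with h1 h2 h3 h4 <;> simp_all <;> omega

lemma Fk_zero (k : ℕ) (x : ℤ) : Fk k 0 x = none := by
  unfold Fk gpar
  rw [Nat.sub_zero, Nat.clog_pow 2 k (by norm_num), Nat.sub_self]
  by_cases hr : 0 ≤ x ∧ x < ((2^k : ℕ) : ℤ)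
  · rw [if_pos hr, if_neg, if_neg]
    · exact_mod_cast not_le.mpr hr.2
    · have : 0 ≤ x % ((2^k/2 : ℕ) : ℤ) := by
        rcases Nat.eq_zero_or_pos (2^k/2) with h | h
        · simp [h]; exact hr.1
        · exact Int.emod_nonneg x (by exact_mod_cast h.ne')
      push_cast at this ⊢
      omega
  · rw [if_neg hr]

section Step

variable {h M j N : ℕ} (h1 : 1 ≤ h) (hM : M = 2 * h) (hj : j < h)
  (hMN : M ∣ N) (hN : M ≤ N)

include h1 hM hj hMN hN

/-- characterization of the ancestors of the chain top `N - M + c₀`. -/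
lemma anc_gpar (c₀ : ℤ) (hc0 : 0 ≤ c₀) (hcM : c₀ < (M:ℤ)) (hch : c₀ % (h:ℤ) = (j:ℤ)) :
    ∀ x : ℤ, anc (gpar h M j N) ((N:ℤ) - M + c₀) x ↔
      (0 ≤ x ∧ x < N ∧ x % (M:ℤ) = c₀) := by
  have hh0 : (0:ℤ) < (h:ℤ) := by exact_mod_cast h1
  have hM0 : (0:ℤ) < (M:ℤ) := by exact_mod_cast (by omega : 0 < M)
  have hNM : (M:ℤ) ≤ (N:ℤ) := by exact_mod_cast hN
  have hdvd : ((h:ℤ)) ∣ ((M:ℤ)) := ⟨2, by push_cast [hM]; ring⟩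
  obtain ⟨e, he⟩ := hMN
  have heZ : (N:ℤ) = (M:ℤ) * e := by exact_mod_cast congrArg (Nat.cast (R := ℤ)) he
  have hval : ∀ y : ℤ, 0 ≤ y → y < (N:ℤ) → y % (M:ℤ) = c₀ →
      gpar h M j N y = if (M:ℤ) ≤ y then some (y - (M:ℤ)) else none := by
    intro y hy0 hyN hyc
    have hyh : y % (h:ℤ) = (j:ℤ) := by
      rw [← Int.emod_emod_of_dvd y hdvd, hyc, hch]
    unfold gpar
    rw [if_pos ⟨hy0, hyN⟩, if_neg (by omega)]
  have hTmod : ((N:ℤ) - M + c₀) % (M:ℤ) = c₀ := by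
    have h2 : (N:ℤ) - M + c₀ = c₀ + (M:ℤ) * (e - 1) := by rw [heZ]; ring
    rw [h2, Int.add_mul_emod_self_left, Int.emod_eq_of_lt hc0 hcM]
  intro x
  constructor
  · intro hx
    induction hx with
    | refl => exact ⟨by omega, by omega, hTmod⟩
    | tail hab hbc ih =>
      rename_i b' c'
      obtain ⟨hb0, hbN, hbc₀⟩ := ih
      have hbc' : gpar h M j N b' = some c' := hbc
      rw [hval b' hb0 hbN hbc₀] at hbc'
      split_ifs at hbc' with hMb
      · obtain rfl : c' = b' - (M:ℤ) := by
          simpa using hbc'.symm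
        refine ⟨by omega, by omega, ?_⟩
        have h2 : b' - (M:ℤ) = b' + (M:ℤ) * (-1) := by ring
        rw [h2, Int.add_mul_emod_self_left, hbc₀]
  · rintro ⟨hx0, hxN, hxc⟩
    have key : ∀ q : ℕ, 0 ≤ (N:ℤ) - M + c₀ - q * M →
        anc (gpar h M j N) ((N:ℤ) - M + c₀) ((N:ℤ) - M + c₀ - q * M) := by
      intro q
      induction q with
      | zero => intro _; simpa [anc] using Relation.ReflTransGen.refl
      | succ q ih =>
        intro hq
        push_cast at hq
        have h0 : 0 ≤ (N:ℤ) - M + c₀ - q * M := by linarith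
        have hyN : (N:ℤ) - M + c₀ - q * M < (N:ℤ) := by
          have : 0 ≤ (q:ℤ) * M := mul_nonneg (Int.natCast_nonneg q) hM0.le
          linarith
        have hym : ((N:ℤ) - M + c₀ - q * M) % (M:ℤ) = c₀ := by
          have h2 : (N:ℤ) - M + c₀ - q * M = c₀ + (M:ℤ) * (e - 1 - q) := by
            rw [heZ]; ring
          rw [h2, Int.add_mul_emod_self_left, Int.emod_eq_of_lt hc0 hcM]
        refine Relation.ReflTransGen.tail (ih h0) ?_
        show gpar h M j N ((N:ℤ) - M + c₀ - q * M)
            = some ((N:ℤ) - M + c₀ - (↑(q + 1)) * M)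
        rw [hval _ h0 hyN hym, if_pos (by linarith)]
        congr 1
        push_cast
        ring
    have hxle : x ≤ (N:ℤ) - M + c₀ := by
      by_contra hlt
      push_neg at hlt
      have hd : (M:ℤ) ∣ (x - ((N:ℤ) - M + c₀)) := by
        apply Int.dvd_of_emod_eq_zero
        rw [← Int.emod_eq_emod_iff_emod_sub_eq_zero, hxc, hTmod]
      have := Int.le_of_dvd (by omega) hd
      omega
    have hd : (M:ℤ) ∣ (((N:ℤ) - M + c₀) - x) := by
      apply Int.dvd_of_emod_eq_zero
      rw [← Int.emod_eq_emod_iff_emod_sub_eq_zero, hxc, hTmod]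
    set q : ℕ := ((((N:ℤ) - M + c₀) - x) / M).toNat with hqdef
    have hq0 : 0 ≤ (((N:ℤ) - M + c₀) - x) / M :=
      Int.ediv_nonneg (by omega) hM0.le
    have hqe : (q:ℤ) * M = ((N:ℤ) - M + c₀) - x := by
      rw [hqdef, Int.toNat_of_nonneg hq0]
      exact Int.ediv_mul_cancel hd
    have := key q (by omega)
    have hxeq : (N:ℤ) - M + c₀ - q * M = x := by omega
    rwa [hxeq] at this

lemma union_iff :
    ∀ x : ℤ, (anc (gpar h M j N) ((N:ℤ) - M + j) x ∨
        anc (gpar h M j N) ((N:ℤ) - M + (j + h)) x) ↔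
      (0 ≤ x ∧ x < N ∧ x % (h:ℤ) = j) := by
  have hh0 : (0:ℤ) < (h:ℤ) := by exact_mod_cast h1
  have hM0 : (0:ℤ) < (M:ℤ) := by exact_mod_cast (by omega : 0 < M)
  have hjZ : (j:ℤ) < h := by exact_mod_cast hj
  have hMZ : (M:ℤ) = 2 * h := by exact_mod_cast hM
  have hjh : (j:ℤ) % (h:ℤ) = (j:ℤ) := Int.emod_eq_of_lt (by positivity) hjZ
  have hjhh : ((j:ℤ) + h) % (h:ℤ) = (j:ℤ) := by
    have : (j:ℤ) + h = (j:ℤ) + (h:ℤ) * 1 := by ring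
    rw [this, Int.add_mul_emod_self_left, hjh]
  have hdvd : ((h:ℤ)) ∣ ((M:ℤ)) := ⟨2, by rw [hMZ]; ring⟩
  intro x
  rw [anc_gpar h1 hM hj hMN hN (j:ℤ) (by positivity) (by omega) hjh x]
  have h2 : ((N:ℤ) - M + (j + h)) = ((N:ℤ) - M + ((j:ℤ) + (h:ℤ))) := by push_cast; ring
  rw [h2, anc_gpar h1 hM hj hMN hN ((j:ℤ) + h) (by positivity) (by omega) hjhh x]
  constructor
  · rintro (⟨hx0, hxN, hxm⟩ | ⟨hx0, hxN, hxm⟩) <;>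
      refine ⟨hx0, hxN, ?_⟩ <;>
      rw [← Int.emod_emod_of_dvd x hdvd, hxm]
    · exact hjh
    · exact hjhh
  · rintro ⟨hx0, hxN, hxh⟩
    have hr0 : 0 ≤ x % (M:ℤ) := Int.emod_nonneg x hM0.ne'
    have hrM : x % (M:ℤ) < (M:ℤ) := Int.emod_lt_of_pos x hM0
    have hrh : (x % (M:ℤ)) % (h:ℤ) = (j:ℤ) := by
      rw [Int.emod_emod_of_dvd x hdvd, hxh]
    by_cases hc : x % (M:ℤ) < (h:ℤ)
    · left
      exact ⟨hx0, hxN, by rw [← hrh, Int.emod_eq_of_lt hr0 hc]⟩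
    · right
      refine ⟨hx0, hxN, ?_⟩
      push_neg at hc
      have hsub : (x % (M:ℤ) - h) % (h:ℤ) = (x % (M:ℤ)) % (h:ℤ) := by
        rw [Int.sub_emod, Int.emod_self, sub_zero, Int.emod_emod_of_dvd _ dvd_rfl]
      have hlt : (x % (M:ℤ) - h) % (h:ℤ) = x % (M:ℤ) - h :=
        Int.emod_eq_of_lt (by omega) (by omega)
      omega
  
lemma mergeStep_gpar :
    MergeStep (gpar h M j N) (gpar h M (j+1) N)
      ((N:ℤ) - M + j) ((N:ℤ) - M + (j + h)) := by
  have hh0 : (0:ℤ) < (h:ℤ) := by exact_mod_cast h1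
  have hM0 : (0:ℤ) < (M:ℤ) := by exact_mod_cast (by omega : 0 < M)
  have hjZ : (j:ℤ) < h := by exact_mod_cast hj
  have hMZ : (M:ℤ) = 2 * h := by exact_mod_cast hM
  have hNZ : (M:ℤ) ≤ (N:ℤ) := by exact_mod_cast hN
  have hUx := union_iff h1 hM hj hMN hN
  -- elements of the union are ≥ j
  have hge : ∀ z : ℤ, 0 ≤ z → z % (h:ℤ) = j → (j:ℤ) ≤ z := by
    intro z hz0 hzh
    by_contra hlt
    push_neg at hlt
    rw [Int.emod_eq_of_lt hz0 (by omega)] at hzh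
    omega
  -- gap of h between consecutive elements
  have hgap : ∀ z x : ℤ, z % (h:ℤ) = j → x % (h:ℤ) = j → z < x → z ≤ x - h := by
    intro z x hz hx hzx
    have hd : (h:ℤ) ∣ (x - z) := by
      apply Int.dvd_of_emod_eq_zero
      rw [← Int.emod_eq_emod_iff_emod_sub_eq_zero, hz, hx]
    have := Int.le_of_dvd (by omega) hd
    omega
  constructor
  · intro x hx
    rw [hUx] at hx
    unfold gpar
    by_cases hr : 0 ≤ x ∧ x < (N:ℤ)
    · rw [if_pos hr, if_pos hr]
      have hne : x % (h:ℤ) ≠ (j:ℤ) := fun hh => hx ⟨hr.1, hr.2, hh⟩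
      by_cases hlt : x % (h:ℤ) < (j:ℤ)
      · rw [if_pos hlt, if_pos (by push_cast; omega)]
      · rw [if_neg hlt, if_neg (by push_cast; omega)]
    · rw [if_neg hr, if_neg hr]
  · intro x hxU
    obtain ⟨hx0, hxN, hxh⟩ := (hUx x).mp hxU
    have hjU : (anc (gpar h M j N) ((N:ℤ) - M + j) (j:ℤ) ∨
        anc (gpar h M j N) ((N:ℤ) - M + (j + h)) (j:ℤ)) := by
      rw [hUx]
      refine ⟨by positivity, by omega, ?_⟩
      exact Int.emod_eq_of_lt (by positivity) hjZ
    by_cases hhx : (h:ℤ) ≤ x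
    · have hq : gpar h M (j+1) N x = some (x - h) := by
        unfold gpar
        rw [if_pos ⟨hx0, hxN⟩, if_pos (by push_cast; omega), if_pos hhx]
      rw [hq]
      constructor
      · intro b
        constructor
        · intro hb
          obtain rfl : b = x - (h:ℤ) := by simpa using hb.symm
          refine ⟨?_, by omega, ?_⟩
          · rw [hUx]
            refine ⟨by omega, by omega, ?_⟩
            have : x - (h:ℤ) = x + (h:ℤ) * (-1) := by ring
            rw [this, Int.add_mul_emod_self_left, hxh]
          · intro z hz hzx
            obtain ⟨hz0, hzN, hzh⟩ := (hUx z).mp hz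
            exact hgap z x hzh hxh hzx
        · rintro ⟨hbU, hbx, hmax⟩
          obtain ⟨hb0, hbN, hbh⟩ := (hUx b).mp hbU
          have h1' : b ≤ x - h := hgap b x hbh hxh hbx
          have h2' : x - h ≤ b := by
            apply hmax
            · rw [hUx]
              refine ⟨by omega, by omega, ?_⟩
              have : x - (h:ℤ) = x + (h:ℤ) * (-1) := by ring
              rw [this, Int.add_mul_emod_self_left, hxh]
            · omega
          have : b = x - (h:ℤ) := by omega
          rw [this]
      · constructor
        · intro hc; exact absurd hc (by simp)
        · intro hall
          exfalso
          refine hall (j:ℤ) hjU ?_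
          have := hge x hx0 hxh
          omega
    · -- x < h, so x = j, the minimum
      have hxj : x = (j:ℤ) := by
        rw [← hxh]
        exact (Int.emod_eq_of_lt hx0 (by omega)).symm
      have hq : gpar h M (j+1) N x = none := by
        unfold gpar
        rw [if_pos ⟨hx0, hxN⟩, if_pos (by push_cast; omega), if_neg hhx]
      rw [hq]
      constructor
      · intro b
        simp only [(by simp : (none : Option ℤ) = some b ↔ False), false_iff]
        rintro ⟨hbU, hbx, _⟩
        obtain ⟨hb0, hbN, hbh⟩ := (hUx b).mp hbU
        have := hge b hb0 hbh
        omega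
      · refine ⟨fun _ z hz hzx => ?_, fun _ => rfl⟩
        obtain ⟨hz0, hzN, hzh⟩ := (hUx z).mp hz
        have := hge z hz0 hzh
        omega

end Step

lemma gpar_boundary (h N : ℕ) (h1 : 1 ≤ h) :
    gpar (h / 2) h 0 N = gpar h (2 * h) h N := by
  funext x
  unfold gpar
  by_cases hr : 0 ≤ x ∧ x < (N:ℤ)
  · have hx0 : (0:ℤ) ≤ x % ((h/2 : ℕ) : ℤ) := by
      rcases Nat.eq_zero_or_pos (h/2) with h2 | h2
      · simp [h2]; exact hr.1
      · exact Int.emod_nonneg x (by exact_mod_cast h2.ne')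
    have hxh : x % ((h:ℕ) : ℤ) < ((h:ℕ) : ℤ) :=
      Int.emod_lt_of_pos x (by exact_mod_cast h1)
    rw [if_pos hr, if_pos hr, if_neg (by push_cast at hx0 ⊢; omega),
      if_pos hxh]
  · rw [if_neg hr, if_neg hr]

/-- The structure of the forest at time `t < 2^k - 1` and `t + 1`. -/
lemma level (k t : ℕ) (hk : 1 ≤ k) (ht : t < 2 ^ k - 1) :
    ∃ h M j : ℕ,
      h = 2 ^ (Nat.clog 2 (2 ^ k - t)) / 2 ∧
      1 ≤ h ∧ M = 2 * h ∧ j < h ∧ M ∣ 2 ^ k ∧ M ≤ 2 ^ k ∧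
      Fk k t = gpar h M j (2 ^ k) ∧
      Fk k (t + 1) = gpar h M (j + 1) (2 ^ k) ∧
      ((2 ^ k : ℤ) - M + j) = (t : ℤ) ∧
      ((2 ^ k : ℤ) - M + (j + h)) = (t : ℤ) + (h : ℤ) := by
  have hN2 : 2 ≤ 2 ^ k := by
    calc 2 = 2^1 := by norm_num
    _ ≤ 2^k := Nat.pow_le_pow_right (by norm_num) hk
  set s := 2 ^ k - t with hs
  have hs2 : 2 ≤ s := by omega
  have hsN : s ≤ 2 ^ k := by omega
  set c := Nat.clog 2 s with hc
  have hsM : s ≤ 2 ^ c := Nat.le_pow_clog (by norm_num) s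
  have hck : c ≤ k := (Nat.clog_le_iff_le_pow (by norm_num)).mpr hsN
  have hc1 : 1 ≤ c := by
    by_contra hc0
    have : c ≤ 0 := by omega
    have := (Nat.clog_le_iff_le_pow (by norm_num) (x := s) (y := 0)).mp this
    simp at this
    omega
  have hhs : 2 ^ (c - 1) < s := by
    by_contra hle
    push_neg at hle
    have := (Nat.clog_le_iff_le_pow (by norm_num)).mpr hle
    omega
  have hMk : 2 ^ c ≤ 2 ^ k := Nat.pow_le_pow_right (by norm_num) hck
  have h2 : 2 ^ c = 2 ^ (c-1) * 2 := by
    rw [← pow_succ]; congr 1; omega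
  have hpow : ((2 ^ k : ℕ) : ℤ) = (2:ℤ) ^ k := by push_cast; ring
  refine ⟨2 ^ c / 2, 2 ^ c, 2 ^ c - s, rfl, by omega, by omega, by omega,
    pow_dvd_pow 2 hck, hMk, rfl, ?_, ?_, ?_⟩
  · -- Fk k (t+1)
    have hs' : 2 ^ k - (t + 1) = s - 1 := by omega
    by_cases hb : 2 ^ (c - 1) < s - 1
    · have hclog : Nat.clog 2 (s - 1) = c := by
        apply le_antisymm
        · exact (Nat.clog_le_iff_le_pow (by norm_num)).mpr (by omega)
        · by_contra hlt
          push_neg at hlt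
          have hle2 : s - 1 ≤ 2 ^ (c - 1) :=
            le_trans ((Nat.le_pow_clog (by norm_num) (s-1)))
              (Nat.pow_le_pow_right (by norm_num) (by omega))
          omega
      unfold Fk
      rw [hs', hclog]
      have ej : 2 ^ c - (s - 1) = 2 ^ c - s + 1 := by omega
      rw [ej]
    · -- s - 1 = 2^(c-1)
      have hbeq : s - 1 = 2 ^ (c - 1) := by omega
      have hclog : Nat.clog 2 (s - 1) = c - 1 := by
        rw [hbeq, Nat.clog_pow 2 (c-1) (by norm_num)]
      unfold Fk
      rw [hs', hclog]
      have hj0 : 2 ^ (c - 1) - (s - 1) = 0 := by omega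
      have hjh : 2 ^ c - s + 1 = 2 ^ (c - 1) := by omega
      rw [hj0, hjh]
      have e1 : 2 ^ c / 2 = 2 ^ (c - 1) := by omega
      have e2 : 2 ^ c = 2 * 2 ^ (c - 1) := by omega
      rw [e1, e2]
      exact gpar_boundary (2 ^ (c - 1)) (2 ^ k) Nat.one_le_two_pow
  · rw [← hpow]; omega
  · rw [← hpow]; omega

/-- Each merge changes at least `N/h - 1` parents. -/
lemma card_changes (h M j N : ℕ) (h1 : 1 ≤ h) (hM : M = 2 * h) (hj : j < h)
    (hhN : h ∣ N) (hN : M ≤ N) :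
    N / h - 1 ≤ (((Finset.Ico (0:ℤ) (N:ℤ)).filter
      (fun x => gpar h M (j+1) N x ≠ gpar h M j N x)).card) := by
  have hh0 : 0 < h := h1
  have hNh : h * (N / h) = N := Nat.mul_div_cancel' hhN
  have hdiv2 : 2 ≤ N / h := by
    by_contra hcon
    push_neg at hcon
    interval_cases hq : N / h <;> omega
  set f : ℕ → ℤ := fun q => ((j + h * (q + 1) : ℕ) : ℤ) with hf
  have hinj : Function.Injective f := by
    intro a b hab
    simp only [hf, Nat.cast_inj] at hab
    have hab2 : h * (a + 1) = h * (b + 1) := by omega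
    have := Nat.eq_of_mul_eq_mul_left hh0 hab2
    omega
  have hsub : (Finset.range (N / h - 1)).image f ⊆
      (Finset.Ico (0:ℤ) (N:ℤ)).filter
        (fun x => gpar h M (j+1) N x ≠ gpar h M j N x) := by
    intro x hx
    simp only [Finset.mem_image, Finset.mem_range] at hx
    obtain ⟨q, hq, rfl⟩ := hx
    have hlt : j + h * (q + 1) < N := by
      have h3 : h * (q + 2) ≤ h * (N / h) := Nat.mul_le_mul_left h (by omega)
      have h4 : h * (q + 2) = h * (q + 1) + h := by ring
      omega
    have hge : h ≤ j + h * (q + 1) := by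
      have : h * (q + 1) = h * q + h := by ring
      omega
    have hrange : (0:ℤ) ≤ ((j + h * (q+1) : ℕ) : ℤ) ∧
        ((j + h * (q+1) : ℕ) : ℤ) < (N:ℤ) := ⟨by positivity, by exact_mod_cast hlt⟩
    have hmod : ((j + h * (q + 1) : ℕ) : ℤ) % (h : ℤ) = (j:ℤ) := by
      push_cast
      rw [Int.add_mul_emod_self_left]
      exact Int.emod_eq_of_lt (by positivity) (by exact_mod_cast hj)
    have hnew : gpar h M (j+1) N ((j + h * (q+1) : ℕ) : ℤ)
        = some (((j + h * (q+1) : ℕ) : ℤ) - (h:ℤ)) := by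
      unfold gpar
      rw [if_pos hrange, if_pos (by rw [hmod]; push_cast; omega),
        if_pos (by exact_mod_cast hge)]
    refine Finset.mem_filter.mpr ⟨Finset.mem_Ico.mpr hrange, ?_⟩
    have hold : gpar h M j N ((j + h * (q+1) : ℕ) : ℤ)
        = if (M:ℤ) ≤ ((j + h * (q+1) : ℕ) : ℤ)
          then some (((j + h * (q+1) : ℕ) : ℤ) - (M:ℤ)) else none := by
      unfold gpar
      rw [if_pos hrange, if_neg (by rw [hmod]; omega)]
    show gpar h M (j+1) N _ ≠ gpar h M j N _
    rw [hnew, hold]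
    split_ifs with hMle
    · intro hcon
      rw [Option.some_inj] at hcon
      have hhM : (h:ℤ) = (M:ℤ) := by omega
      have : h = M := by exact_mod_cast hhM
      omega
    · simp
  calc N / h - 1 = ((Finset.range (N / h - 1)).image f).card := by
        rw [Finset.card_image_of_injective _ hinj, Finset.card_range]
    _ ≤ _ := Finset.card_le_card hsub

/-- Lower bound for the number of parent changes at step `t`. -/
def cost (k t : ℕ) : ℕ := 2 ^ k / (2 ^ (Nat.clog 2 (2 ^ k - t)) / 2) - 1

lemma sum_cost : ∀ k, 1 ≤ k →
    ∑ t ∈ Finset.range (2 ^ k - 1), cost k t = k * 2 ^ k - 2 ^ k + 1 := by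
  intro k
  induction k with
  | zero => intro hcon; omega
  | succ k ih =>
    intro _
    by_cases hk : 1 ≤ k
    · have hIH := ih hk
      have h2k : (2:ℕ) ≤ 2 ^ k := by
        calc (2:ℕ) = 2^1 := by norm_num
        _ ≤ 2^k := Nat.pow_le_pow_right (by norm_num) hk
      have hsplit : 2 ^ (k+1) - 1 = 2 ^ k + (2 ^ k - 1) := by
        have : 2 ^ (k+1) = 2 * 2 ^ k := by ring
        omega
      rw [hsplit, Finset.sum_range_add]
      have hpart1 : ∀ t ∈ Finset.range (2 ^ k), cost (k+1) t = 1 := by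
        intro t ht
        rw [Finset.mem_range] at ht
        have he : 2 ^ (k+1) = 2 * 2 ^ k := by ring
        have hs1 : 2 ^ k < 2 ^ (k+1) - t := by omega
        have hs2 : 2 ^ (k+1) - t ≤ 2 ^ (k+1) := by omega
        have hclog : Nat.clog 2 (2 ^ (k+1) - t) = k + 1 := by
          apply le_antisymm
          · exact (Nat.clog_le_iff_le_pow (by norm_num)).mpr hs2
          · by_contra hlt
            push_neg at hlt
            have := le_trans (Nat.le_pow_clog (by norm_num) (2 ^ (k+1) - t))
              (Nat.pow_le_pow_right (by norm_num)
                (by omega : Nat.clog 2 (2 ^ (k+1) - t) ≤ k))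
            omega
        unfold cost
        rw [hclog]
        have e1 : 2 ^ (k+1) / 2 = 2 ^ k := by
          rw [he]; exact Nat.mul_div_cancel_left _ (by norm_num)
        rw [e1]
        have e2 : 2 ^ (k+1) / 2 ^ k = 2 := by
          rw [Nat.pow_div (by omega) (by norm_num)]; norm_num
        rw [e2]
      rw [Finset.sum_congr rfl hpart1]
      have hpart2 : ∀ t ∈ Finset.range (2 ^ k - 1),
          cost (k+1) (2 ^ k + t) = 2 * cost k t + 1 := by
        intro t ht
        rw [Finset.mem_range] at ht
        have he : 2 ^ (k+1) = 2 * 2 ^ k := by ring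
        have hseq : 2 ^ (k+1) - (2 ^ k + t) = 2 ^ k - t := by omega
        unfold cost
        rw [hseq]
        set c := Nat.clog 2 (2 ^ k - t) with hc
        have hs2 : 2 ≤ 2 ^ k - t := by omega
        have hck : c ≤ k := (Nat.clog_le_iff_le_pow (by norm_num)).mpr (by omega)
        have hc1 : 1 ≤ c := by
          by_contra h0
          have := (Nat.clog_le_iff_le_pow (b := 2) (by norm_num)
            (x := 2 ^ k - t) (y := 0)).mp (by omega)
          simp at this
          omega
        have hcc : 2 ^ c / 2 = 2 ^ (c - 1) := by
          have : 2 ^ c = 2 ^ (c-1) * 2 := by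
            rw [← pow_succ]; congr 1; omega
          omega
        have hdv : 2 ^ c / 2 ∣ 2 ^ k := by
          rw [hcc]; exact pow_dvd_pow 2 (by omega)
        have e3 : 2 ^ (k+1) / (2 ^ c / 2) = 2 * (2 ^ k / (2 ^ c / 2)) := by
          rw [he, Nat.mul_div_assoc 2 hdv]
        rw [e3]
        have hble : 2 ^ c / 2 ≤ 2 ^ k := by
          rw [hcc]; exact Nat.pow_le_pow_right (by norm_num) (by omega)
        have hbpos : 0 < 2 ^ c / 2 := by
          rw [hcc]; exact Nat.pow_pos (by norm_num)
        have hpos : 1 ≤ 2 ^ k / (2 ^ c / 2) :=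
          (Nat.one_le_div_iff hbpos).mpr hble
        omega
      rw [Finset.sum_congr rfl hpart2]
      simp only [Finset.sum_add_distrib, Finset.sum_const, Finset.card_range,
        smul_eq_mul, mul_one, ← Finset.mul_sum]
      rw [hIH]
      have e4 : (k+1) * 2 ^ (k+1) = 2 * (k * 2 ^ k) + 2 * 2 ^ k := by ring
      have e5 : 2 ^ (k+1) = 2 * 2 ^ k := by ring
      have e6 : 2 ^ k ≤ k * 2 ^ k := by
        calc 2 ^ k = 1 * 2 ^ k := by ring
        _ ≤ k * 2 ^ k := Nat.mul_le_mul_right _ hk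
      omega
    · have hk0 : k = 0 := by omega
      subst hk0
      norm_num
      have hclog : Nat.clog 2 2 = 1 := by
        have := Nat.clog_pow 2 1 (by norm_num)
        simpa using this
      simp [cost, hclog]

end MergeProof

/-- There is a sequence of `n − 1 = 2^k − 1` merges starting from `n = 2^k`
single-node trees (no cuts) whose total number of parent changes is at least
`(n/2)·k − n = Ω(n log n)`: merge the paths in pairs with perfect interleaving
at each of the `k` levels. -/
theorem exists_merge_sequence_many_parent_changes (k : ℕ) (hk : 1 ≤ k) :
    ∃ (V : Finset ℤ) (F : ℕ → ℤ → Option ℤ) (v w : ℕ → ℤ),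
      V.card = 2 ^ k ∧
      (∀ x : ℤ, F 0 x = none) ∧
      (∀ i, ∀ x b : ℤ, F i x = some b → x ∈ V ∧ b ∈ V) ∧
      (∀ i < 2 ^ k - 1, v i ∈ V ∧ w i ∈ V ∧
        MergeStep (F i) (F (i + 1)) (v i) (w i)) ∧
      (2 ^ k / 2) * k - 2 ^ k ≤
        ∑ i ∈ Finset.range (2 ^ k - 1),
          (V.filter (fun x => F (i + 1) x ≠ F i x)).card := by
  classical
  have hpow : ((2 ^ k : ℕ) : ℤ) = (2:ℤ) ^ k := by push_cast; ring
  have h2k : (2:ℕ) ≤ 2 ^ k := by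
    calc (2:ℕ) = 2^1 := by norm_num
    _ ≤ 2^k := Nat.pow_le_pow_right (by norm_num) hk
  refine ⟨Finset.Ico (0:ℤ) ((2 ^ k : ℕ) : ℤ), MergeProof.Fk k,
    (fun t => (t : ℤ)),
    (fun t => (t : ℤ) + ((2 ^ (Nat.clog 2 (2 ^ k - t)) / 2 : ℕ) : ℤ)),
    ?_, MergeProof.Fk_zero k, ?_, ?_, ?_⟩
  · rw [Int.card_Ico, sub_zero]
    omega
  · intro i x b hb
    unfold MergeProof.Fk at hb
    obtain ⟨⟨hx0, hxN⟩, hb0, hbN⟩ := MergeProof.gpar_mem hb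
    exact ⟨Finset.mem_Ico.mpr ⟨hx0, hxN⟩, Finset.mem_Ico.mpr ⟨hb0, hbN⟩⟩
  · intro i hi
    obtain ⟨h, M, j, hh, h1, hM, hj, hMN, hMk, hFt, hFt1, htop1, htop2⟩ :=
      MergeProof.level k i hk hi
    have hms := MergeProof.mergeStep_gpar h1 hM hj hMN hMk (N := 2 ^ k)
    rw [hpow, htop1, htop2] at hms
    refine ⟨?_, ?_, ?_⟩
    · refine Finset.mem_Ico.mpr ⟨by positivity, ?_⟩
      show (i:ℤ) < ((2 ^ k : ℕ) : ℤ)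
      omega
    · refine Finset.mem_Ico.mpr ⟨by positivity, ?_⟩
      show (i:ℤ) + ((2 ^ (Nat.clog 2 (2 ^ k - i)) / 2 : ℕ) : ℤ) < ((2 ^ k : ℕ) : ℤ)
      rw [← hh]
      omega
    · show MergeStep (MergeProof.Fk k i) (MergeProof.Fk k (i+1)) (i:ℤ)
        ((i:ℤ) + ((2 ^ (Nat.clog 2 (2 ^ k - i)) / 2 : ℕ) : ℤ))
      rw [hFt, hFt1, ← hh]
      exact hms

  · have hterm : ∀ i ∈ Finset.range (2 ^ k - 1), MergeProof.cost k i ≤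
        ((Finset.Ico (0:ℤ) ((2 ^ k : ℕ) : ℤ)).filter
          (fun x => MergeProof.Fk k (i+1) x ≠ MergeProof.Fk k i x)).card := by
      intro i hi
      rw [Finset.mem_range] at hi
      obtain ⟨h, M, j, hh, h1, hM, hj, hMN, hMk, hFt, hFt1, htop1, htop2⟩ :=
        MergeProof.level k i hk hi
      have hhdvd : h ∣ 2 ^ k := dvd_trans ⟨2, by omega⟩ hMN
      have hcard := MergeProof.card_changes h M j (2 ^ k) h1 hM hj hhdvd hMk
      have hcost : MergeProof.cost k i = 2 ^ k / h - 1 := by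
        unfold MergeProof.cost
        rw [← hh]
      rw [hcost, hFt, hFt1]
      exact hcard
    calc (2 ^ k / 2) * k - 2 ^ k ≤ k * 2 ^ k - 2 ^ k + 1 := by
          have e : 2 ^ k = 2 ^ (k-1) * 2 := by
            rw [← pow_succ]; congr 1; omega
          have e3 : (2 ^ k / 2) * k = 2 ^ (k-1) * k := by
            rw [show 2 ^ k / 2 = 2 ^ (k-1) from by omega]
          have e4 : k * 2 ^ k = 2 ^ (k-1) * k * 2 := by rw [e]; ring
          omega
      _ = ∑ i ∈ Finset.range (2 ^ k - 1), MergeProof.cost k i :=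
          (MergeProof.sum_cost k hk).symm
      _ ≤ _ := Finset.sum_le_sum hterm
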